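/- Let P > 0 and write s_{:,i} = (s_{1,i},…,s_{N_r,i}) ∈ ℂ^{N_r}. Suppose (W*, t*) is an optimal solution of the block-level SB slot-invariant problem (maximize t over pairs (W, t), W ∈ ℂ^{N_t×N_r}, subject to CI_i(W s_{:,i}, t) for all i and ∑_{i=1}^{N_s} ‖W s_{:,i}‖² ≤ P) with t* > 0. Then ∑_{i=1}^{N_s} ‖W* s_{:,i}‖² = P, and W*/t* is an optimal solution of the block-level PM slot-invariant problem (minimize ∑_i ‖W s_{:,i}‖² over W subject to CI_i(W s_{:,i}, 1) for all i), with optimal value P/(t*)². -/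
import Mathlib


open scoped BigOperators

/-- The constructive-interference (CI) constraint in a given symbol slot:
`CI Nt Nr M h s γ σ x t` holds iff for every user `k`,
`Re((h_kᵀ x)/s_k) − |Im((h_kᵀ x)/s_k)| / tan(π/M) ≥ t·√(γ_k)·σ`. -/
noncomputable def CI (Nt Nr M : ℕ) (h : Fin Nr → Fin Nt → ℂ)
    (s : Fin Nr → ℂ) (γ : Fin Nr → ℝ) (σ : ℝ)
    (x : Fin Nt → ℂ) (t : ℝ) : Prop :=
  ∀ k : Fin Nr,
    ((∑ j, h k j * x j) / s k).re -
        |((∑ j, h k j * x j) / s k).im| / Real.tan (Real.pi / M) ≥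
      t * Real.sqrt (γ k) * σ

lemma CI_smul (Nt Nr M : ℕ) (h : Fin Nr → Fin Nt → ℂ) (s : Fin Nr → ℂ)
    (γ : Fin Nr → ℝ) (σ : ℝ) (x : Fin Nt → ℂ) (t c : ℝ) (hc : 0 ≤ c)
    (hx : CI Nt Nr M h s γ σ x t) :
    CI Nt Nr M h s γ σ (c • x) (c * t) := by
  intro k
  have hk := hx k
  have hsum : (∑ j, h k j * (c • x) j) = (c : ℂ) * ∑ j, h k j * x j := by
    rw [Finset.mul_sum]
    refine Finset.sum_congr rfl fun j _ => ?_
    simp [Complex.real_smul]; ring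
  rw [hsum, mul_div_assoc]
  set z := (∑ j, h k j * x j) / s k with hz
  have hre : ((c : ℂ) * z).re = c * z.re := by simp [Complex.mul_re]
  have him : ((c : ℂ) * z).im = c * z.im := by simp [Complex.mul_im]
  rw [hre, him, abs_mul, abs_of_nonneg hc, mul_div_assoc]
  have h2 := mul_le_mul_of_nonneg_left hk hc
  nlinarith [h2]

lemma pow_smul_sum (Nt Nr Ns : ℕ) (c : ℝ) (W : Matrix (Fin Nt) (Fin Nr) ℂ)
    (s : Fin Nr → Fin Ns → ℂ) :
    ∑ i, ∑ j, ‖(c • W).mulVec (fun k => s k i) j‖ ^ 2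
      = c ^ 2 * ∑ i, ∑ j, ‖W.mulVec (fun k => s k i) j‖ ^ 2 := by
  rw [Finset.mul_sum]
  refine Finset.sum_congr rfl fun i _ => ?_
  rw [Finset.mul_sum]
  refine Finset.sum_congr rfl fun j _ => ?_
  rw [Matrix.smul_mulVec]
  simp [norm_smul, mul_pow, sq_abs]

/-- A block-level SB slot-invariant optimum `(W*, t*)` with `t* > 0` has active
power constraint `∑ᵢ ‖W* s_{:,i}‖² = P`, and `W*/t*` is a block-level PM
slot-invariant optimum with value `P/(t*)²`. -/
theorem stmt14 (Nt Nr Ns M : ℕ) (hNt : 0 < Nt) (hNr : 0 < Nr) (hNs : 0 < Ns)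
    (hM : 3 ≤ M)
    (h : Fin Nr → Fin Nt → ℂ)
    (s : Fin Nr → Fin Ns → ℂ) (hs : ∀ k i, s k i ≠ 0)
    (γ : Fin Nr → Fin Ns → ℝ) (hγ : ∀ k i, 0 ≤ γ k i)
    (σ : ℝ) (hσ : 0 < σ)
    (P : ℝ) (hP : 0 < P)
    (Wstar : Matrix (Fin Nt) (Fin Nr) ℂ) (tstar : ℝ) (htstar : 0 < tstar)
    (hfeas : ∀ i, CI Nt Nr M h (fun k => s k i) (fun k => γ k i) σ
      (Wstar.mulVec fun k => s k i) tstar)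
    (hpow : ∑ i, ∑ j, ‖Wstar.mulVec (fun k => s k i) j‖ ^ 2 ≤ P)
    (hopt : ∀ (W : Matrix (Fin Nt) (Fin Nr) ℂ) (t : ℝ),
      (∀ i, CI Nt Nr M h (fun k => s k i) (fun k => γ k i) σ
        (W.mulVec fun k => s k i) t) →
      (∑ i, ∑ j, ‖W.mulVec (fun k => s k i) j‖ ^ 2 ≤ P) → t ≤ tstar) :
    (∑ i, ∑ j, ‖Wstar.mulVec (fun k => s k i) j‖ ^ 2 = P) ∧
    (∀ i, CI Nt Nr M h (fun k => s k i) (fun k => γ k i) σ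
        (((1 / tstar) • Wstar).mulVec fun k => s k i) 1) ∧
    (∀ W : Matrix (Fin Nt) (Fin Nr) ℂ,
      (∀ i, CI Nt Nr M h (fun k => s k i) (fun k => γ k i) σ
        (W.mulVec fun k => s k i) 1) →
      ∑ i, ∑ j, ‖((1 / tstar) • Wstar).mulVec (fun k => s k i) j‖ ^ 2 ≤
        ∑ i, ∑ j, ‖W.mulVec (fun k => s k i) j‖ ^ 2) ∧
    (∑ i, ∑ j, ‖((1 / tstar) • Wstar).mulVec (fun k => s k i) j‖ ^ 2
      = P / tstar ^ 2) := by
  -- if all √γ vanish, the SB problem is unbounded in t, contradiction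
  have hcontr : ¬ (∀ k i, Real.sqrt (γ k i) = 0) := by
    intro hall
    have hle : tstar + 1 ≤ tstar := by
      refine hopt Wstar (tstar + 1) (fun i k => ?_) hpow
      have hk := hfeas i k
      simp only [hall k i] at hk ⊢
      simpa using hk
    linarith
  -- a W with zero power and feasible at positive t yields √γ = 0 everywhere
  have key0 : ∀ W : Matrix (Fin Nt) (Fin Nr) ℂ, ∀ t : ℝ, 0 < t →
      (∑ i, ∑ j, ‖W.mulVec (fun k => s k i) j‖ ^ 2 = 0) →
      (∀ i, CI Nt Nr M h (fun k => s k i) (fun k => γ k i) σ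
        (W.mulVec fun k => s k i) t) → False := by
    intro W t ht hQ hW
    apply hcontr
    intro k i
    have hterm : ∀ j, ‖W.mulVec (fun k => s k i) j‖ ^ 2 = 0 := by
      intro j
      have h1 : ∑ j, ‖W.mulVec (fun k => s k i) j‖ ^ 2 = 0 :=
        (Finset.sum_eq_zero_iff_of_nonneg
          (fun i _ => Finset.sum_nonneg fun j _ => by positivity)).mp hQ i
          (Finset.mem_univ i)
      exact (Finset.sum_eq_zero_iff_of_nonneg (fun j _ => by positivity)).mp h1 j
        (Finset.mem_univ j)
    have hzero : W.mulVec (fun k => s k i) = 0 := by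
      funext j
      have := hterm j
      have hn : ‖W.mulVec (fun k => s k i) j‖ = 0 := by
        nlinarith [norm_nonneg (W.mulVec (fun k => s k i) j)]
      exact norm_eq_zero.mp hn
    have hk := hW i k
    rw [hzero] at hk
    simp only [Pi.zero_apply, mul_zero, Finset.sum_const_zero, zero_div,
      Complex.zero_re, Complex.zero_im, abs_zero, sub_zero] at hk
    -- hk : 0 ≥ t * √(γ k i) * σ
    by_contra hne
    have hpos : 0 < Real.sqrt (γ k i) :=
      lt_of_le_of_ne (Real.sqrt_nonneg _) (Ne.symm hne)
    have := mul_pos (mul_pos ht hpos) hσ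
    linarith
  have hSnn : 0 ≤ ∑ i, ∑ j, ‖Wstar.mulVec (fun k => s k i) j‖ ^ 2 := by
    apply Finset.sum_nonneg; intro i _; apply Finset.sum_nonneg; intro j _; positivity
  have hSpos : 0 < ∑ i, ∑ j, ‖Wstar.mulVec (fun k => s k i) j‖ ^ 2 := by
    rcases hSnn.lt_or_eq with h0 | h0
    · exact h0
    · exact (key0 Wstar tstar htstar h0.symm hfeas).elim
  -- first claim: power constraint active
  have hSP : ∑ i, ∑ j, ‖Wstar.mulVec (fun k => s k i) j‖ ^ 2 = P := by
    rcases lt_or_eq_of_le hpow with hlt | heq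
    · exfalso
      set S := ∑ i, ∑ j, ‖Wstar.mulVec (fun k => s k i) j‖ ^ 2 with hSdef
      set c := Real.sqrt (P / S) with hcdef
      have hc0 : 0 ≤ c := Real.sqrt_nonneg _
      have hcsq : c ^ 2 = P / S := Real.sq_sqrt (by positivity)
      have hc1 : 1 < c := by
        have : (1 : ℝ) < P / S := (one_lt_div hSpos).mpr hlt
        nlinarith
      have hfeas' : ∀ i, CI Nt Nr M h (fun k => s k i) (fun k => γ k i) σ
          ((c • Wstar).mulVec fun k => s k i) (c * tstar) := by
        intro i
        rw [Matrix.smul_mulVec]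
        exact CI_smul _ _ _ _ _ _ _ _ _ _ hc0 (hfeas i)
      have hpow' : ∑ i, ∑ j, ‖(c • Wstar).mulVec (fun k => s k i) j‖ ^ 2 ≤ P := by
        rw [pow_smul_sum, ← hSdef, hcsq, div_mul_cancel₀ _ (ne_of_gt hSpos)]
      have hle := hopt (c • Wstar) (c * tstar) hfeas' hpow'
      nlinarith [mul_pos (sub_pos.mpr hc1) htstar]
    · exact heq
  refine ⟨hSP, ?_, ?_, ?_⟩
  · intro i
    have hc := CI_smul Nt Nr M h (fun k => s k i) (fun k => γ k i) σ
      (Wstar.mulVec fun k => s k i) tstar (1 / tstar) (by positivity) (hfeas i)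
    rw [one_div, inv_mul_cancel₀ (ne_of_gt htstar)] at hc
    rw [Matrix.smul_mulVec, one_div]
    exact hc
  · intro W hW
    set Q := ∑ i, ∑ j, ‖W.mulVec (fun k => s k i) j‖ ^ 2 with hQdef
    have hQnn : 0 ≤ Q := by
      apply Finset.sum_nonneg; intro i _; apply Finset.sum_nonneg; intro j _; positivity
    have hQpos : 0 < Q := by
      rcases hQnn.lt_or_eq with h0 | h0
      · exact h0
      · exact (key0 W 1 one_pos h0.symm hW).elim
    have hval : ∑ i, ∑ j, ‖((1 / tstar) • Wstar).mulVec (fun k => s k i) j‖ ^ 2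
        = P / tstar ^ 2 := by
      rw [pow_smul_sum, hSP]
      field_simp
    rw [hval]
    -- scale W up to power P
    set c := Real.sqrt (P / Q) with hcdef
    have hc0 : 0 ≤ c := Real.sqrt_nonneg _
    have hcsq : c ^ 2 = P / Q := Real.sq_sqrt (by positivity)
    have hfeas' : ∀ i, CI Nt Nr M h (fun k => s k i) (fun k => γ k i) σ
        ((c • W).mulVec fun k => s k i) (c * 1) := by
      intro i
      rw [Matrix.smul_mulVec]
      exact CI_smul _ _ _ _ _ _ _ _ _ _ hc0 (hW i)
    have hpow' : ∑ i, ∑ j, ‖(c • W).mulVec (fun k => s k i) j‖ ^ 2 ≤ P := by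
      rw [pow_smul_sum, ← hQdef, hcsq, div_mul_cancel₀ _ (ne_of_gt hQpos)]
    have hle := hopt (c • W) (c * 1) hfeas' hpow'
    rw [mul_one] at hle
    -- c ≤ tstar, c² = P/Q ⇒ P/tstar² ≤ Q
    have hPeq : P = c ^ 2 * Q := by
      rw [hcsq, div_mul_cancel₀ _ (ne_of_gt hQpos)]
    have hcc : c ^ 2 ≤ tstar ^ 2 := pow_le_pow_left₀ hc0 hle 2
    rw [div_le_iff₀ (by positivity)]
    calc P = c ^ 2 * Q := hPeq
      _ ≤ tstar ^ 2 * Q := mul_le_mul_of_nonneg_right hcc hQnn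
      _ = Q * tstar ^ 2 := mul_comm _ _
  · rw [pow_smul_sum, hSP]
    field_simp
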